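/- Let L = F_{2^{2k}} with k even and 3 ∤ k. Then there exist cubes a, b, c ∈ L^* with a + b = ωc for some fixed element ω of multiplicative order 3, such that at least one of a, b, c lies in the subfield F_{2^k} and at least one lies outside F_{2^k}. -/

import Mathlib

open Polynomial Finset


open Polynomial Finset

lemma cnt (F : Type*) [Field F] [Fintype F] [DecidableEq F] (n : ℕ) (hn : 0 < n)
    (hd : n ∣ Fintype.card F - 1) (a α : F) (hα : α ^ n = a) (h0 : a ≠ 0) :
    (Finset.univ.filter (fun x : F => x ^ n = a)).card = n := by
  obtain ⟨g, hg⟩ := IsCyclic.exists_monoid_generator (α := Fˣ)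
  have hcard1 : 0 < Fintype.card F - 1 := by
    have := Fintype.one_lt_card (α := F); omega
  have hog : orderOf g = Fintype.card F - 1 := by
    rw [← Fintype.card_units, ← Nat.card_eq_fintype_card]
    exact orderOf_eq_card_of_forall_mem_zpowers (fun x => by
      obtain ⟨m, hm⟩ := hg x
      exact ⟨(m : ℤ), by simpa using hm⟩)
  have hdd : (Fintype.card F - 1) / n ∣ orderOf g := by rw [hog]; exact Nat.div_dvd_of_dvd hd
  have hdnz : (Fintype.card F - 1) / n ≠ 0 := by
    have := Nat.div_pos (Nat.le_of_dvd hcard1 hd) hn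
    omega
  have horder : orderOf (g ^ ((Fintype.card F - 1) / n)) = n := by
    rw [orderOf_pow_of_dvd hdnz hdd, hog, Nat.div_div_self hd (by omega)]
  set ζu := g ^ ((Fintype.card F - 1) / n)
  have horderF : orderOf ((ζu : F)) = n := by rw [orderOf_units]; exact horder
  have hprim : IsPrimitiveRoot ((ζu : F)) n := by
    rw [← horderF]; exact IsPrimitiveRoot.orderOf _
  have hset : (Finset.univ.filter (fun x : F => x ^ n = a)) = (nthRoots n a).toFinset := by
    ext x
    simp [Polynomial.mem_nthRoots hn]
  rw [hset, Multiset.toFinset_card_of_nodup (hprim.nthRoots_nodup h0),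
    hprim.card_nthRoots a, if_pos ⟨α, hα⟩]

-- helper 2: cube extraction
lemma cube_ex (F : Type*) [Field F] [Fintype F] (T : ℕ) (hT : 0 < T)
    (h3T : 3 * T = Fintype.card F - 1) (v : F) (hv : v ≠ 0) (hvT : v ^ T = 1) :
    ∃ z : F, z ^ 3 = v := by
  classical
  obtain ⟨g, hg⟩ := IsCyclic.exists_monoid_generator (α := Fˣ)
  have hcard1 : 0 < Fintype.card F - 1 := by omega
  have hog : orderOf g = Fintype.card F - 1 := by
    rw [← Fintype.card_units, ← Nat.card_eq_fintype_card]
    exact orderOf_eq_card_of_forall_mem_zpowers (fun x => by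
      obtain ⟨m, hm⟩ := hg x
      exact ⟨(m : ℤ), by simpa using hm⟩)
  obtain ⟨m, hm⟩ := hg (Units.mk0 v hv)
  have huT : (g ^ m) ^ T = 1 := by
    apply Units.ext
    push_cast [hm]
    exact hvT
  have : orderOf g ∣ m * T := by
    rw [← pow_mul] at huT
    exact orderOf_dvd_of_pow_eq_one huT
  rw [hog, ← h3T] at this
  have h3m : 3 ∣ m := by
    obtain ⟨c, hc⟩ := this
    have hmc : m * T = (3 * c) * T := by rw [hc]; ring
    have : m = 3 * c := Nat.eq_of_mul_eq_mul_right hT hmc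
    exact ⟨c, this⟩
  obtain ⟨s, rfl⟩ := h3m
  refine ⟨((g ^ s : Fˣ) : F), ?_⟩
  have : ((g ^ s) ^ 3 : Fˣ) = Units.mk0 v hv := by rw [← pow_mul, mul_comm]; exact hm
  calc ((g ^ s : Fˣ) : F) ^ 3 = (((g ^ s) ^ 3 : Fˣ) : F) := by push_cast; ring
    _ = v := by rw [this]; rfl

lemma arith (k : ℕ) (hk : 0 < k) (hke : Even k) (hk3 : ¬ 3 ∣ k) :
    ∃ M : ℕ, 3 * M = 2 ^ k - 1 ∧ ¬ 3 ∣ M ∧ 1 ≤ M := by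
  have hK2 : 2 ≤ 2 ^ k := by
    calc 2 = 2 ^ 1 := by norm_num
    _ ≤ 2 ^ k := Nat.pow_le_pow_right (by norm_num) hk
  have hsplit : 2 ^ k = 64 ^ (k / 6) * 2 ^ (k % 6) := by
    rw [show (64 : ℕ) = 2 ^ 6 by norm_num, ← pow_mul, ← pow_add]
    congr 1
    omega
  have hmod : 2 ^ k % 9 = 2 ^ (k % 6) % 9 := by
    have : (64 : ℕ) ^ (k / 6) * 2 ^ (k % 6) ≡ 1 ^ (k / 6) * 2 ^ (k % 6) [MOD 9] :=
      Nat.ModEq.mul (Nat.ModEq.pow _ (by decide)) (Nat.ModEq.refl _)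
    simpa [hsplit, one_pow, Nat.ModEq] using this
  have hke2 : k % 2 = 0 := Nat.even_iff.mp hke
  have hk3' : k % 3 ≠ 0 := fun h => hk3 (Nat.dvd_of_mod_eq_zero h)
  have h62 : k % 6 % 2 = k % 2 := Nat.mod_mod_of_dvd k (by norm_num)
  have h63 : k % 6 % 3 = k % 3 := Nat.mod_mod_of_dvd k (by norm_num)
  have hr : k % 6 = 2 ∨ k % 6 = 4 := by omega
  have hK9 : 2 ^ k % 9 = 4 ∨ 2 ^ k % 9 = 7 := by
    rcases hr with h | h <;> rw [hmod, h] <;> simp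
  refine ⟨(2 ^ k - 1) / 3, by omega, by omega, by omega⟩


theorem stmt9 (F : Type*) [Field F] [Fintype F] (k : ℕ) (hk : 0 < k)
    (hke : Even k) (hk3 : ¬ 3 ∣ k)
    (hcard : Fintype.card F = 2 ^ (2 * k))
    (ω : F) (hω : orderOf ω = 3) :
    ∃ a b c : F, a ≠ 0 ∧ b ≠ 0 ∧ c ≠ 0 ∧
      (∃ x : F, x ^ 3 = a) ∧ (∃ y : F, y ^ 3 = b) ∧ (∃ z : F, z ^ 3 = c) ∧
      a + b = ω * c ∧
      (a ^ 2 ^ k = a ∨ b ^ 2 ^ k = b ∨ c ^ 2 ^ k = c) ∧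
      (a ^ 2 ^ k ≠ a ∨ b ^ 2 ^ k ≠ b ∨ c ^ 2 ^ k ≠ c) := by
  classical
  -- characteristic 2
  have hchar : ringChar F = 2 := by
    obtain ⟨n, hp, hc⟩ := FiniteField.card F (ringChar F)
    have hdvd : ringChar F ∣ 2 ^ (2 * k) := by
      rw [← hcard, hc]
      exact dvd_pow_self _ (by exact_mod_cast n.ne_zero)
    exact (Nat.prime_dvd_prime_iff_eq hp Nat.prime_two).mp (hp.dvd_of_dvd_pow hdvd)
  haveI hF2 : CharP F 2 := hchar ▸ ringChar.charP F
  haveI : Fact (Nat.Prime 2) := ⟨Nat.prime_two⟩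
  have h2 : (2 : F) = 0 := by exact_mod_cast CharP.cast_eq_zero F 2
  have frob : ∀ u v : F, (u + v) ^ 2 ^ k = u ^ 2 ^ k + v ^ 2 ^ k := fun u v =>
    add_pow_char_pow u v 2 k
  have hqid : ∀ u : F, u ^ 2 ^ (2 * k) = u := fun u => by
    have := FiniteField.pow_card u
    rwa [hcard] at this
  obtain ⟨M, hM, hM3, hM1⟩ := arith k hk hke hk3
  have hk2 : 2 ≤ 2 ^ k := by
    calc 2 = 2 ^ 1 := by norm_num
    _ ≤ 2 ^ k := Nat.pow_le_pow_right (by norm_num) hk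
  have hpk : 2 ^ k = 3 * M + 1 := by omega
  have hcard2 : Fintype.card F = 2 ^ k * 2 ^ k := by rw [hcard, two_mul, pow_add]
  have hcardbig : 2 ^ k < Fintype.card F := by
    rw [hcard2]; nlinarith
  -- ω facts
  have hω3 : ω ^ 3 = 1 := by rw [← hω]; exact pow_orderOf_eq_one ω
  have hω0 : ω ≠ 0 := by
    intro h; rw [h] at hω3; simp at hω3
  have hω1 : ω ≠ 1 := by
    intro h; rw [h, orderOf_one] at hω; omega
  have hωp1 : ω + 1 ≠ 0 := by
    intro h
    apply hω1
    linear_combination h - h2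
  have hωsum : ω ^ 2 + ω + 1 = 0 := by
    have hmul : (ω + 1) * (ω ^ 2 + ω + 1) = 0 := by
      linear_combination hω3 + (ω ^ 2 + ω + 1) * h2
    rcases mul_eq_zero.mp hmul with h | h
    · exact absurd h hωp1
    · exact h
  have hω2 : ω ^ 2 + ω = 1 := by linear_combination hωsum - h2
  have hωk : ω ^ 2 ^ k = ω := by
    rw [hpk, pow_succ, pow_mul, hω3, one_pow, one_mul]
  have hωM1 : ω ^ M ≠ 1 := by
    intro h
    exact hM3 (hω ▸ orderOf_dvd_of_pow_eq_one h)
  have hωM0 : ω ^ M ≠ 0 := pow_ne_zero _ hω0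
  -- divisibilities
  have hfact : (2 ^ (2 * k) - 1 : ℕ) = (2 ^ k - 1) * (2 ^ k + 1) := by
    have h1 : 1 ≤ 2 ^ k := by omega
    have : (2:ℕ) ^ (2 * k) = 2 ^ k * 2 ^ k := by rw [two_mul, pow_add]
    rw [this, Nat.sub_mul, Nat.mul_add, Nat.one_mul, Nat.mul_one]
    omega
  have hdvd1 : (2 ^ k - 1 : ℕ) ∣ Fintype.card F - 1 := by
    rw [hcard, hfact]; exact Dvd.intro _ rfl
  have hdvdM : M ∣ Fintype.card F - 1 := dvd_trans ⟨3, by omega⟩ hdvd1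
  -- counting sets
  set Kt : Finset F := univ.filter (fun x : F => x ^ 2 ^ k = x) with hKt
  have hmemKt : ∀ x : F, x ∈ Kt ↔ x ^ 2 ^ k = x := by
    intro x; simp [hKt]
  have hKadd : ∀ u v : F, u ∈ Kt → v ∈ Kt → u + v ∈ Kt := by
    intro u v hu hv
    rw [hmemKt] at *
    rw [frob, hu, hv]
  have hKsq : ∀ u : F, u ∈ Kt → u ^ 2 ∈ Kt := by
    intro u hu
    rw [hmemKt] at *
    rw [← pow_mul, mul_comm, pow_mul, hu]
  have h0K : (0 : F) ∈ Kt := by rw [hmemKt]; simp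
  have h1K : (1 : F) ∈ Kt := by rw [hmemKt]; simp
  have hωK : ω ∈ Kt := by rw [hmemKt]; exact hωk
  -- card of Kt
  have hKtcard : Kt.card = 2 ^ k := by
    have hins : Kt = insert (0 : F) (univ.filter (fun x : F => x ^ (2 ^ k - 1) = 1)) := by
      ext y
      rw [hmemKt]
      simp only [Finset.mem_insert, mem_filter, mem_univ, true_and]
      constructor
      · intro hy
        by_cases hy0 : y = 0
        · exact Or.inl hy0
        · right
          have : y ^ (2 ^ k - 1) * y = 1 * y := by
            rw [one_mul, ← pow_succ]
            rwa [show 2 ^ k - 1 + 1 = 2 ^ k by omega]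
          exact mul_right_cancel₀ hy0 this
      · rintro (rfl | hy)
        · simp
        · have : y ^ (2 ^ k - 1) * y = y := by rw [hy, one_mul]
          rw [← pow_succ, show 2 ^ k - 1 + 1 = 2 ^ k by omega] at this
          exact this
    have h0notin : (0 : F) ∉ univ.filter (fun x : F => x ^ (2 ^ k - 1) = 1) := by
      simp only [mem_filter, mem_univ, true_and]
      rw [zero_pow (by omega : 2 ^ k - 1 ≠ 0)]
      exact zero_ne_one
    rw [hins, Finset.card_insert_of_notMem h0notin,
      cnt F (2 ^ k - 1) (by omega) hdvd1 1 1 (one_pow _) one_ne_zero]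
    omega
  -- the A set
  set A : Finset F := univ.filter (fun x : F => x ^ M = ω ^ M) with hA
  have hAcard : A.card = M := cnt F M (by omega) hdvdM (ω ^ M) ω rfl hωM0
  -- P set
  set Pt : Finset F := Kt.image (fun e => e ^ 2 + e) with hPt
  have hPtK : ∀ p ∈ Pt, p ∈ Kt := by
    intro p hp
    obtain ⟨e, he, rfl⟩ := Finset.mem_image.mp hp
    exact hKadd _ _ (hKsq _ he) he
  have hPadd : ∀ p q : F, p ∈ Pt → q ∈ Pt → p + q ∈ Pt := by
    intro p q hp hq
    obtain ⟨e, he, rfl⟩ := Finset.mem_image.mp hp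
    obtain ⟨f, hf, rfl⟩ := Finset.mem_image.mp hq
    apply Finset.mem_image.mpr
    refine ⟨e + f, hKadd _ _ he hf, ?_⟩
    linear_combination (e * f) * h2
  have hKt2P : Kt.card = 2 * Pt.card := by
    rw [Finset.card_eq_sum_card_fiberwise (f := fun e : F => e ^ 2 + e) (t := Pt)
      (fun x hx => Finset.mem_image_of_mem _ hx)]
    have hfib : ∀ p ∈ Pt, (Kt.filter (fun e : F => e ^ 2 + e = p)).card = 2 := by
      intro p hp
      obtain ⟨e, heK, hep⟩ := Finset.mem_image.mp hp
      have hset : Kt.filter (fun x : F => x ^ 2 + x = p) = {e, e + 1} := by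
        ext y
        simp only [Finset.mem_filter, Finset.mem_insert, Finset.mem_singleton]
        constructor
        · rintro ⟨hyK, hyp⟩
          have hfac : (y + e) * (y + e + 1) = 0 := by
            linear_combination hyp + hep + (y * e + p) * h2
          rcases mul_eq_zero.mp hfac with h | h
          · left; linear_combination h - e * h2
          · right; linear_combination h - e * h2 - h2
        · rintro (rfl | rfl)
          · exact ⟨heK, hep⟩
          · refine ⟨hKadd _ _ heK h1K, ?_⟩
            linear_combination hep + (e + 1) * h2
      rw [hset]
      rw [Finset.card_pair (by
        intro h
        have : (1 : F) = 0 := by linear_combination -h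
        exact one_ne_zero this)]
    rw [Finset.sum_congr rfl hfib, Finset.sum_const, smul_eq_mul, mul_comm]
  -- existence of x ∈ A \ Pt
  have hAx : ∃ x ∈ A, x ∉ Pt := by
    by_contra hcon
    push_neg at hcon
    set A2 : Finset F := A.image (fun x => x ^ 2) with hA2
    have hsqinj : Function.Injective (fun x : F => x ^ 2) := by
      intro u v huv
      simp only at huv
      have : (u + v) ^ 2 = 0 := by linear_combination huv + (v^2 + u*v) * h2
      have h0 : u + v = 0 := by
        exact pow_eq_zero_iff (by norm_num) |>.mp this
      linear_combination h0 - v * h2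
    have hA2card : A2.card = M := by
      rw [hA2, Finset.card_image_of_injective _ hsqinj, hAcard]
    have hA2P : ∀ y ∈ A2, y ∈ Pt := by
      intro y hy
      obtain ⟨x, hx, rfl⟩ := Finset.mem_image.mp hy
      obtain ⟨e, he, hex⟩ := Finset.mem_image.mp (hcon x hx)
      apply Finset.mem_image.mpr
      refine ⟨e ^ 2, hKsq _ he, ?_⟩
      have hx2 : (e ^ 2 + e) ^ 2 = x ^ 2 := by rw [hex]
      linear_combination hx2 - e^3 * h2
    have hdisj : Disjoint A A2 := by
      rw [Finset.disjoint_left]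
      intro x hxA hxA2
      obtain ⟨y, hy, rfl⟩ := Finset.mem_image.mp hxA2
      have h1 : (y ^ 2) ^ M = ω ^ M := by
        have := Finset.mem_filter.mp hxA
        exact this.2
      have h2' : y ^ M = ω ^ M := (Finset.mem_filter.mp hy).2
      have : (ω ^ M) ^ 2 = ω ^ M := by
        rw [← h2', ← pow_mul, mul_comm, pow_mul, h1]; exact h2'.symm
      have hωM1' : ω ^ M = 1 := by
        have hfac : ω ^ M * (ω ^ M - 1) = 0 := by linear_combination this
        rcases mul_eq_zero.mp hfac with h | h
        · exact absurd h hωM0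
        · linear_combination h
      exact hωM1 hωM1'
    have h0A : (0 : F) ∉ A := by
      simp only [hA, Finset.mem_filter, mem_univ, true_and]
      rw [zero_pow (by omega : M ≠ 0)]
      exact fun h => hωM0 h.symm
    have h0A2 : (0 : F) ∉ A2 := by
      intro h
      obtain ⟨y, hy, hy2⟩ := Finset.mem_image.mp h
      have : y = 0 := by
        have := pow_eq_zero_iff (n := 2) (by norm_num) |>.mp hy2
        exact this
      rw [this] at hy
      exact h0A hy
    have hsub : insert (0 : F) (A ∪ A2) ⊆ Pt := by
      intro y hy
      rcases Finset.mem_insert.mp hy with rfl | hy'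
      · apply Finset.mem_image.mpr
        exact ⟨0, h0K, by ring⟩
      · rcases Finset.mem_union.mp hy' with h | h
        · exact hcon y h
        · exact hA2P y h
    have hcardle : 1 + (M + M) ≤ Pt.card := by
      have := Finset.card_le_card hsub
      rw [Finset.card_insert_of_notMem (by
          intro h
          rcases Finset.mem_union.mp h with h | h
          · exact h0A h
          · exact h0A2 h),
        Finset.card_union_of_disjoint hdisj, hAcard, hA2card] at this
      omega
    omega
    -- contradiction: 2*(1+2M) ≤ Kt.card = 2^k = 3M+1
  obtain ⟨x, hxA, hxP⟩ := hAx
  have hxM : x ^ M = ω ^ M := (Finset.mem_filter.mp hxA).2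
  have hx0 : x ≠ 0 := by
    intro h; rw [h, zero_pow (by omega : M ≠ 0)] at hxM; exact hωM0 hxM.symm
  have hx1 : x ≠ 1 := by
    intro h; rw [h, one_pow] at hxM; exact hωM1 hxM.symm
  have hxK : x ^ 2 ^ k = x := by
    calc x ^ 2 ^ k = (x ^ M) ^ 3 * x := by rw [hpk, pow_succ, mul_comm 3 M, pow_mul]
    _ = (ω ^ 3) ^ M * x := by rw [hxM, ← pow_mul, mul_comm M 3, pow_mul]
    _ = x := by rw [hω3, one_pow, one_mul]
  have hxKt : x ∈ Kt := (hmemKt x).mpr hxK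
  -- an element outside the subfield
  have hKtne : ∃ w : F, w ∉ Kt := by
    by_contra hcon
    push_neg at hcon
    have : Kt = univ := Finset.eq_univ_iff_forall.mpr hcon
    rw [this, Finset.card_univ] at hKtcard
    omega
  obtain ⟨w, hw⟩ := hKtne
  have hwne : w ^ 2 ^ k ≠ w := fun h => hw ((hmemKt w).mpr h)
  set d := w + w ^ 2 ^ k with hd
  have hd0 : d ≠ 0 := by
    intro h
    apply hwne
    linear_combination h - w * h2
  have hdK : d ^ 2 ^ k = d := by
    have he2 : 2 ^ k * 2 ^ k = 2 ^ (2 * k) := by rw [two_mul, pow_add]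
    have hq2 : (w ^ 2 ^ k) ^ 2 ^ k = w := by rw [← pow_mul, he2, hqid w]
    rw [hd, frob, hq2]
    ring
  set γ := w / d with hγdef
  have hγsum : γ + γ ^ 2 ^ k = 1 := by
    rw [hγdef, div_pow, hdK, ← add_div, ← hd, div_self hd0]
  have hγ : γ ^ 2 ^ k = γ + 1 := by linear_combination hγsum - γ * h2
  set δ := γ ^ 2 + γ with hδdef
  have hδK : δ ∈ Kt := by
    rw [hmemKt, hδdef, frob]
    have hsq2 : (γ ^ 2) ^ 2 ^ k = (γ ^ 2 ^ k) ^ 2 := by rw [← pow_mul, mul_comm, pow_mul]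
    rw [hsq2, hγ]
    linear_combination (γ + 1) * h2
  have hγnK : γ ∉ Kt := by
    intro hmem
    have h' := (hmemKt γ).mp hmem
    rw [hγ] at h'
    exact one_ne_zero (by linear_combination h')
  have hδP : δ ∉ Pt := by
    intro hmem
    obtain ⟨e, heK, hee⟩ := Finset.mem_image.mp hmem
    have hfac : (γ + e) * (γ + e + 1) = 0 := by
      linear_combination hee + hδdef + (γ ^ 2 + γ + γ * e) * h2
    rcases mul_eq_zero.mp hfac with h | h
    · apply hγnK
      have hge : γ = e := by linear_combination h - e * h2
      rw [hge]; exact heK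
    · apply hγnK
      have hge : γ = e + 1 := by linear_combination h - e * h2 - h2
      rw [hge]; exact hKadd _ _ heK h1K
  have h1P : (1 : F) ∈ Pt := Finset.mem_image.mpr ⟨ω, hωK, hω2⟩
  have h1δK : 1 + δ ∈ Kt := hKadd _ _ h1K hδK
  have h1δP : 1 + δ ∉ Pt := by
    intro hmem
    apply hδP
    have hsum := hPadd 1 (1 + δ) h1P hmem
    rwa [show (1 : F) + (1 + δ) = δ from by linear_combination h2] at hsum
  -- coset step : x lies in the nontrivial coset of Pt
  have hxB : x + (1 + δ) ∈ Pt := by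
    set Q := Pt.image (fun p => p + (1 + δ)) with hQ
    have hQK : ∀ y ∈ Q, y ∈ Kt := by
      intro y hy
      obtain ⟨p, hp, rfl⟩ := Finset.mem_image.mp hy
      exact hKadd _ _ (hPtK _ hp) h1δK
    have hdisj : Disjoint Pt Q := by
      rw [Finset.disjoint_left]
      intro p hp hpQ
      obtain ⟨r, hr, hre⟩ := Finset.mem_image.mp hpQ
      apply h1δP
      have hsum := hPadd _ _ hr hp
      rwa [show r + p = 1 + δ from by linear_combination r * h2 - hre] at hsum
    have hQcard : Q.card = Pt.card :=
      Finset.card_image_of_injective _ (add_left_injective (1 + δ))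
    have hsub : Pt ∪ Q ⊆ Kt := by
      intro y hy
      rcases Finset.mem_union.mp hy with h | h
      · exact hPtK _ h
      · exact hQK _ h
    have hcards : (Pt ∪ Q).card = Kt.card := by
      rw [Finset.card_union_of_disjoint hdisj, hQcard]; omega
    have huniv : Pt ∪ Q = Kt := Finset.eq_of_subset_of_card_le hsub (by omega)
    have hxin : x ∈ Pt ∪ Q := by rw [huniv]; exact hxKt
    rcases Finset.mem_union.mp hxin with h | h
    · exact absurd h hxP
    · obtain ⟨p, hp, hpe⟩ := Finset.mem_image.mp h
      have heq : x + (1 + δ) = p := by linear_combination (1 + δ) * h2 - hpe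
      rw [heq]; exact hp
  obtain ⟨e, heK, hee⟩ := Finset.mem_image.mp hxB
  set t := γ + e with htdef
  have ht2 : t ^ 2 + t = x + 1 := by
    linear_combination hee + hδdef + (γ ^ 2 + γ + γ * e) * h2
  have htk : t ^ 2 ^ k = t + 1 := by
    rw [htdef, frob, hγ, (hmemKt e).mp heK]
    ring
  have ht0 : t ≠ 0 := by
    intro h
    have h0 : (0 : F) = x + 1 := by rw [← ht2, h]; ring
    exact hx1 (by linear_combination -h0 - h2)
  have ht1 : t + 1 ≠ 0 := by
    intro h
    have heq : t = 1 := by linear_combination h - h2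
    rw [heq] at ht2
    exact hx1 (by linear_combination -ht2)
  have hsum2 : t ^ 3 + (t + 1) ^ 3 = x := by
    linear_combination 3 * ht2 + (t ^ 3 + x + 2) * h2
  refine ⟨t ^ 3, (t + 1) ^ 3, ω ^ 2 * x, pow_ne_zero _ ht0, pow_ne_zero _ ht1,
    mul_ne_zero (pow_ne_zero _ hω0) hx0, ⟨t, rfl⟩, ⟨t + 1, rfl⟩, ?_, ?_, ?_, ?_⟩
  · -- ω^2 * x is a cube
    set T := M * (2 ^ k + 1) with hT
    have hTpos : 0 < T := by
      have : 0 < 2 ^ k + 1 := by positivity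
      exact Nat.mul_pos (by omega) this
    have h3T : 3 * T = Fintype.card F - 1 := by
      rw [hT, hcard, hfact, ← hM]; ring
    have hx2k : x ^ (M * 2 ^ k) = ω ^ M := by
      rw [mul_comm M (2 ^ k), pow_mul, hxK, hxM]
    have hxT : x ^ T = ω ^ M * ω ^ M := by
      rw [hT, mul_add, mul_one, pow_add, hx2k, hxM]
    have hvT : (ω ^ 2 * x) ^ T = 1 := by
      rw [mul_pow, hxT, ← pow_mul, ← pow_add, ← pow_add]
      have hdiv : 2 * T + (M + M) = 3 * (2 * (M * M) + 2 * M) := by rw [hT, hpk]; ring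
      rw [hdiv, pow_mul, hω3, one_pow]
    exact cube_ex F T hTpos h3T _ (mul_ne_zero (pow_ne_zero _ hω0) hx0) hvT
  · -- the sum identity
    linear_combination hsum2 + x * hω3 - 2 * x * hω3
  · -- c is in the subfield
    right; right
    rw [mul_pow]
    have hω2k : (ω ^ 2) ^ 2 ^ k = ω ^ 2 := by rw [← pow_mul, mul_comm, pow_mul, hωk]
    rw [hω2k, hxK]
  · -- a is outside the subfield
    left
    have ha : (t ^ 3) ^ 2 ^ k = (t + 1) ^ 3 := by rw [← pow_mul, mul_comm, pow_mul, htk]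
    rw [ha]
    intro hab
    exact hx0 (by linear_combination hab - hsum2 + t ^ 3 * h2)
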